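/- Let s, t, t' be nonnegative integrable functions on a measure space, r = (t+t')/2, and define T(s dμ, t, t') = [ρ_r(s dμ, t') − (1/2)∫ t' dμ] − [ρ_r(s dμ, t) − (1/2)∫ t dμ], with ρ_r(s dμ, u) = (1/2)[∫√(ur) dμ + ∫√(u/r) s dμ]. If T(s dμ, t, t') ≥ 0, then H²(s, t') ≤ ((√2 + 1)/(√2 − 1)) · H²(s, t), where H²(u,v) = (1/2)∫(√u − √v)² dμ. -/

import Mathlib

open MeasureTheory Real ENNReal

lemma aux_sqrt_am {a b : ℝ} (ha : 0 ≤ a) (hb : 0 ≤ b) :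
    Real.sqrt (a * b) ≤ (a + b) / 2 := by
  rw [Real.sqrt_mul ha]
  nlinarith [Real.sq_sqrt ha, Real.sq_sqrt hb, sq_nonneg (Real.sqrt a - Real.sqrt b),
    Real.sqrt_nonneg a, Real.sqrt_nonneg b]

lemma aux_int_sqrt_mul {𝒳 : Type*} [MeasurableSpace 𝒳] {μ : Measure 𝒳} {f g : 𝒳 → ℝ}
    (hf0 : ∀ x, 0 ≤ f x) (hg0 : ∀ x, 0 ≤ g x)
    (hfi : Integrable f μ) (hgi : Integrable g μ) :
    Integrable (fun x => Real.sqrt (f x * g x)) μ := by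
  refine Integrable.mono' ((hfi.add hgi).div_const 2)
    (Real.continuous_sqrt.measurable.comp_aemeasurable
      (hfi.aemeasurable.mul hgi.aemeasurable)).aestronglyMeasurable
    (Filter.Eventually.of_forall fun x => ?_)
  rw [Real.norm_eq_abs, abs_of_nonneg (Real.sqrt_nonneg _)]
  exact aux_sqrt_am (hf0 x) (hg0 x)

lemma aux_int_sq_sub {𝒳 : Type*} [MeasurableSpace 𝒳] {μ : Measure 𝒳} {f g : 𝒳 → ℝ}
    (hf0 : ∀ x, 0 ≤ f x) (hg0 : ∀ x, 0 ≤ g x)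
    (hfi : Integrable f μ) (hgi : Integrable g μ) :
    Integrable (fun x => (Real.sqrt (f x) - Real.sqrt (g x))^2) μ := by
  have hm : AEMeasurable (fun x => (Real.sqrt (f x) - Real.sqrt (g x))^2) μ := by
    have h1 := Real.continuous_sqrt.measurable.comp_aemeasurable hfi.aemeasurable
    have h2 := Real.continuous_sqrt.measurable.comp_aemeasurable hgi.aemeasurable
    simpa [sq, Function.comp_def, Pi.mul_def, Pi.sub_def] using (h1.sub h2).mul (h1.sub h2)
  refine Integrable.mono' ((hfi.add hgi).const_mul 2) hm.aestronglyMeasurable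
    (Filter.Eventually.of_forall fun x => ?_)
  rw [Real.norm_eq_abs, abs_of_nonneg (sq_nonneg _)]
  simp only [Pi.add_apply]
  nlinarith [Real.sq_sqrt (hf0 x), Real.sq_sqrt (hg0 x),
    sq_nonneg (Real.sqrt (f x) + Real.sqrt (g x))]

lemma aux_ratio_le {u r : ℝ} (hu0 : 0 ≤ u) (hr0 : 0 ≤ r) (hur : u ≤ 2 * r) :
    Real.sqrt u / Real.sqrt r ≤ Real.sqrt 2 := by
  rcases eq_or_lt_of_le hr0 with h | h
  · have hu : u = 0 := le_antisymm (by linarith) hu0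
    simp [hu, ← h, Real.sqrt_nonneg]
  · rw [div_le_iff₀ (Real.sqrt_pos.mpr h), ← Real.sqrt_mul (by norm_num)]
    exact Real.sqrt_le_sqrt hur

lemma aux_int_ratio_mul {𝒳 : Type*} [MeasurableSpace 𝒳] {μ : Measure 𝒳} {u r w : 𝒳 → ℝ}
    (hu0 : ∀ x, 0 ≤ u x) (hr0 : ∀ x, 0 ≤ r x) (hw0 : ∀ x, 0 ≤ w x)
    (hur : ∀ x, u x ≤ 2 * r x)
    (hui : Integrable u μ) (hri : Integrable r μ) (hwi : Integrable w μ) :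
    Integrable (fun x => (Real.sqrt (u x) / Real.sqrt (r x)) * w x) μ := by
  have hm : AEMeasurable (fun x => (Real.sqrt (u x) / Real.sqrt (r x)) * w x) μ :=
    ((Real.continuous_sqrt.measurable.comp_aemeasurable hui.aemeasurable).div
      (Real.continuous_sqrt.measurable.comp_aemeasurable hri.aemeasurable)).mul hwi.aemeasurable
  refine Integrable.mono' (hwi.const_mul (Real.sqrt 2)) hm.aestronglyMeasurable
    (Filter.Eventually.of_forall fun x => ?_)
  rw [Real.norm_eq_abs, abs_of_nonneg (mul_nonneg (div_nonneg (Real.sqrt_nonneg _)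
    (Real.sqrt_nonneg _)) (hw0 x))]
  exact mul_le_mul_of_nonneg_right (aux_ratio_le (hu0 x) (hr0 x) (hur x)) (hw0 x)

lemma aux_ptwise_id {s u r : ℝ} (hs0 : 0 ≤ s) (hu0 : 0 ≤ u) (hr0 : 0 ≤ r)
    (hur : u ≤ 2 * r) :
    Real.sqrt (u * r) + (Real.sqrt u / Real.sqrt r) * s
      = 2 * Real.sqrt (u * s)
        + (Real.sqrt u / Real.sqrt r) * (Real.sqrt s - Real.sqrt r)^2 := by
  rcases eq_or_lt_of_le hr0 with h | h
  · have hu : u = 0 := le_antisymm (by linarith) hu0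
    simp [hu, ← h]
  · have hrpos := Real.sqrt_pos.mpr h
    rw [Real.sqrt_mul hu0, Real.sqrt_mul hu0]
    field_simp
    nlinarith [Real.sq_sqrt hs0, Real.sq_sqrt (le_of_lt h), Real.sqrt_nonneg u,
      Real.sqrt_nonneg s, Real.sqrt_nonneg r]

lemma aux_key {𝒳 : Type*} [MeasurableSpace 𝒳] {μ : Measure 𝒳} {s u r : 𝒳 → ℝ}
    (hs0 : ∀ x, 0 ≤ s x) (hu0 : ∀ x, 0 ≤ u x) (hr0 : ∀ x, 0 ≤ r x)
    (hur : ∀ x, u x ≤ 2 * r x)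
    (hsi : Integrable s μ) (hui : Integrable u μ) (hri : Integrable r μ) :
    (∫ x, Real.sqrt (u x * r x) ∂μ)
      + ∫ x, (Real.sqrt (u x) / Real.sqrt (r x)) * s x ∂μ
    = 2 * (∫ x, Real.sqrt (u x * s x) ∂μ)
      + ∫ x, (Real.sqrt (u x) / Real.sqrt (r x))
          * (Real.sqrt (s x) - Real.sqrt (r x))^2 ∂μ := by
  have hsq : Integrable (fun x => (Real.sqrt (s x) - Real.sqrt (r x))^2) μ :=
    aux_int_sq_sub hs0 hr0 hsi hri
  have hsq' : Integrable (fun x => (Real.sqrt (r x) - Real.sqrt (s x))^2) μ := by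
    simpa [sq] using (aux_int_sq_sub hr0 hs0 hri hsi)
  have h1 : Integrable (fun x => Real.sqrt (u x * r x)) μ := aux_int_sqrt_mul hu0 hr0 hui hri
  have h2 : Integrable (fun x => (Real.sqrt (u x) / Real.sqrt (r x)) * s x) μ :=
    aux_int_ratio_mul hu0 hr0 hs0 hur hui hri hsi
  have h3 : Integrable (fun x => Real.sqrt (u x * s x)) μ := aux_int_sqrt_mul hu0 hs0 hui hsi
  have h4 : Integrable (fun x => (Real.sqrt (u x) / Real.sqrt (r x))
      * (Real.sqrt (s x) - Real.sqrt (r x))^2) μ := by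
    refine aux_int_ratio_mul hu0 hr0 (fun x => sq_nonneg _) hur hui hri hsq
  rw [← integral_add h1 h2, ← integral_const_mul, ← integral_add (h3.const_mul 2) h4]
  exact integral_congr_ae (Filter.Eventually.of_forall fun x =>
    aux_ptwise_id (hs0 x) (hu0 x) (hr0 x) (hur x))

lemma aux_lint_conv {𝒳 : Type*} [MeasurableSpace 𝒳] {μ : Measure 𝒳} {s u r : 𝒳 → ℝ}
    (hs0 : ∀ x, 0 ≤ s x) (hu0 : ∀ x, 0 ≤ u x) (hr0 : ∀ x, 0 ≤ r x)
    (hur : ∀ x, u x ≤ 2 * r x)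
    (hsi : Integrable s μ) (hui : Integrable u μ) (hri : Integrable r μ) :
    (∫⁻ x, (ENNReal.ofReal (Real.sqrt (u x)) / ENNReal.ofReal (Real.sqrt (r x)))
        * ENNReal.ofReal (s x) ∂μ)
      = ENNReal.ofReal (∫ x, (Real.sqrt (u x) / Real.sqrt (r x)) * s x ∂μ) := by
  have hpt : ∀ x, (ENNReal.ofReal (Real.sqrt (u x)) / ENNReal.ofReal (Real.sqrt (r x)))
      * ENNReal.ofReal (s x)
      = ENNReal.ofReal ((Real.sqrt (u x) / Real.sqrt (r x)) * s x) := by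
    intro x
    rcases eq_or_lt_of_le (hr0 x) with h | h
    · have hu : u x = 0 := le_antisymm (by linarith [hur x]) (hu0 x)
      simp [hu, ← h]
    · rw [← ENNReal.ofReal_div_of_pos (Real.sqrt_pos.mpr h),
        ← ENNReal.ofReal_mul (div_nonneg (Real.sqrt_nonneg _) (Real.sqrt_nonneg _))]
  calc ∫⁻ x, (ENNReal.ofReal (Real.sqrt (u x)) / ENNReal.ofReal (Real.sqrt (r x)))
        * ENNReal.ofReal (s x) ∂μ
      = ∫⁻ x, ENNReal.ofReal ((Real.sqrt (u x) / Real.sqrt (r x)) * s x) ∂μ :=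
        lintegral_congr hpt
    _ = ENNReal.ofReal (∫ x, (Real.sqrt (u x) / Real.sqrt (r x)) * s x ∂μ) :=
        (MeasureTheory.ofReal_integral_eq_lintegral_ofReal
          (aux_int_ratio_mul hu0 hr0 hs0 hur hui hri hsi)
          (Filter.Eventually.of_forall fun x => mul_nonneg
            (div_nonneg (Real.sqrt_nonneg _) (Real.sqrt_nonneg _)) (hs0 x))).symm

lemma aux_one_lt_sqrt_two : 1 < Real.sqrt 2 := by
  rw [show (1:ℝ) = Real.sqrt 1 by simp]
  exact Real.sqrt_lt_sqrt (by norm_num) (by norm_num)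

lemma aux_final {X Y c : ℝ} (hX : 0 ≤ X) (hY : 0 ≤ Y) (hc : c ^ 2 = 2) (h1 : 1 < c)
    (h : Y - X ≤ c * ((X + Y) / 2)) : (1/2) * Y ≤ ((c + 1) / (c - 1)) * ((1/2) * X) := by
  rw [div_mul_eq_mul_div (c + 1) (c - 1) (1/2 * X), le_div_iff₀ (by linarith)]
  nlinarith

/-- If the test statistic `T(s dμ, t, t') ≥ 0`, i.e.
`ρ_r(s dμ, t') − (1/2)∫ t' dμ ≥ ρ_r(s dμ, t) − (1/2)∫ t dμ` with `r = (t+t')/2`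
(stated additively in `ℝ≥0∞`), then `H²(s,t') ≤ ((√2+1)/(√2−1)) H²(s,t)`. -/
theorem stmt_5 {𝒳 : Type*} [MeasurableSpace 𝒳] (μ : Measure 𝒳) (s t t' : 𝒳 → ℝ)
    (hs : ∀ x, 0 ≤ s x) (ht : ∀ x, 0 ≤ t x) (ht' : ∀ x, 0 ≤ t' x)
    (hsi : Integrable s μ) (hti : Integrable t μ) (ht'i : Integrable t' μ)
    (r : 𝒳 → ℝ) (hrdef : r = fun x => (t x + t' x) / 2)
    (hT : (1/2) * ((∫⁻ x, ENNReal.ofReal (Real.sqrt (t x * r x)) ∂μ)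
        + ∫⁻ x, (ENNReal.ofReal (Real.sqrt (t x)) / ENNReal.ofReal (Real.sqrt (r x)))
            * ENNReal.ofReal (s x) ∂μ)
      + ENNReal.ofReal ((1/2) * ∫ x, t' x ∂μ)
      ≤ (1/2) * ((∫⁻ x, ENNReal.ofReal (Real.sqrt (t' x * r x)) ∂μ)
        + ∫⁻ x, (ENNReal.ofReal (Real.sqrt (t' x)) / ENNReal.ofReal (Real.sqrt (r x)))
            * ENNReal.ofReal (s x) ∂μ)
      + ENNReal.ofReal ((1/2) * ∫ x, t x ∂μ)) :
    (1/2) * (∫ x, (Real.sqrt (s x) - Real.sqrt (t' x))^2 ∂μ) ≤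
      ((Real.sqrt 2 + 1) / (Real.sqrt 2 - 1)) *
        ((1/2) * ∫ x, (Real.sqrt (s x) - Real.sqrt (t x))^2 ∂μ) := by
  have hr : ∀ x, r x = (t x + t' x) / 2 := fun x => by rw [hrdef]
  have hr0 : ∀ x, 0 ≤ r x := fun x => by rw [hr]; linarith [ht x, ht' x]
  have htr : ∀ x, t x ≤ 2 * r x := fun x => by rw [hr]; linarith [ht' x]
  have ht'r : ∀ x, t' x ≤ 2 * r x := fun x => by rw [hr]; linarith [ht x]
  have hri : Integrable r μ := by rw [hrdef]; exact (hti.add ht'i).div_const 2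
  -- convert hT to real form
  have hA := MeasureTheory.ofReal_integral_eq_lintegral_ofReal
    (aux_int_sqrt_mul ht hr0 hti hri)
    (Filter.Eventually.of_forall fun x => Real.sqrt_nonneg _)
  have hA' := MeasureTheory.ofReal_integral_eq_lintegral_ofReal
    (aux_int_sqrt_mul ht' hr0 ht'i hri)
    (Filter.Eventually.of_forall fun x => Real.sqrt_nonneg _)
  have hB := aux_lint_conv hs ht hr0 htr hsi hti hri
  have hB' := aux_lint_conv hs ht' hr0 ht'r hsi ht'i hri
  have hAnn : 0 ≤ ∫ x, Real.sqrt (t x * r x) ∂μ :=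
    integral_nonneg fun x => Real.sqrt_nonneg _
  have hA'nn : 0 ≤ ∫ x, Real.sqrt (t' x * r x) ∂μ :=
    integral_nonneg fun x => Real.sqrt_nonneg _
  have hBnn : 0 ≤ ∫ x, (Real.sqrt (t x) / Real.sqrt (r x)) * s x ∂μ :=
    integral_nonneg fun x => mul_nonneg (div_nonneg (Real.sqrt_nonneg _) (Real.sqrt_nonneg _)) (hs x)
  have hB'nn : 0 ≤ ∫ x, (Real.sqrt (t' x) / Real.sqrt (r x)) * s x ∂μ :=
    integral_nonneg fun x => mul_nonneg (div_nonneg (Real.sqrt_nonneg _) (Real.sqrt_nonneg _)) (hs x)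
  have hItnn : 0 ≤ ∫ x, t x ∂μ := integral_nonneg ht
  have hIt'nn : 0 ≤ ∫ x, t' x ∂μ := integral_nonneg ht'
  have h2 : (1/2 : ℝ≥0∞) = ENNReal.ofReal (1/2) := by
    rw [ENNReal.ofReal_div_of_pos (by norm_num), ENNReal.ofReal_one, ENNReal.ofReal_ofNat]
  rw [← hA, ← hA', hB, hB', h2,
    ← ENNReal.ofReal_add hAnn hBnn, ← ENNReal.ofReal_add hA'nn hB'nn,
    ← ENNReal.ofReal_mul (by norm_num : (0:ℝ) ≤ 1/2),
    ← ENNReal.ofReal_mul (by norm_num : (0:ℝ) ≤ 1/2),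
    ← ENNReal.ofReal_add (mul_nonneg (by norm_num) (add_nonneg hAnn hBnn))
      (mul_nonneg (by norm_num) hIt'nn),
    ← ENNReal.ofReal_add (mul_nonneg (by norm_num) (add_nonneg hA'nn hB'nn))
      (mul_nonneg (by norm_num) hItnn)] at hT
  have hTr := (ENNReal.ofReal_le_ofReal_iff
    (add_nonneg (mul_nonneg (by norm_num) (add_nonneg hA'nn hB'nn))
      (mul_nonneg (by norm_num) hItnn))).mp hT
  -- key identities
  have key := aux_key hs ht hr0 htr hsi hti hri
  have key' := aux_key hs ht' hr0 ht'r hsi ht'i hri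
  -- error-term bounds
  have hDri : Integrable (fun x => (Real.sqrt (s x) - Real.sqrt (r x))^2) μ :=
    aux_int_sq_sub hs hr0 hsi hri
  have hDti : Integrable (fun x => (Real.sqrt (s x) - Real.sqrt (t x))^2) μ :=
    aux_int_sq_sub hs ht hsi hti
  have hDt'i : Integrable (fun x => (Real.sqrt (s x) - Real.sqrt (t' x))^2) μ :=
    aux_int_sq_sub hs ht' hsi ht'i
  have hE0 : 0 ≤ ∫ x, (Real.sqrt (t x) / Real.sqrt (r x))
      * (Real.sqrt (s x) - Real.sqrt (r x))^2 ∂μ :=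
    integral_nonneg fun x => mul_nonneg (div_nonneg (Real.sqrt_nonneg _) (Real.sqrt_nonneg _)) (sq_nonneg _)
  have hE'le : ∫ x, (Real.sqrt (t' x) / Real.sqrt (r x))
      * (Real.sqrt (s x) - Real.sqrt (r x))^2 ∂μ
      ≤ Real.sqrt 2 * ∫ x, (Real.sqrt (s x) - Real.sqrt (r x))^2 ∂μ := by
    rw [← integral_const_mul]
    refine integral_mono
      (aux_int_ratio_mul ht' hr0 (fun x => sq_nonneg _) ht'r ht'i hri hDri)
      (hDri.const_mul _) fun x => ?_
    exact mul_le_mul_of_nonneg_right (aux_ratio_le (ht' x) (hr0 x) (ht'r x)) (sq_nonneg _)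
  have hDr : ∫ x, (Real.sqrt (s x) - Real.sqrt (r x))^2 ∂μ
      ≤ ((∫ x, (Real.sqrt (s x) - Real.sqrt (t x))^2 ∂μ)
        + ∫ x, (Real.sqrt (s x) - Real.sqrt (t' x))^2 ∂μ) / 2 := by
    rw [← integral_add hDti hDt'i, ← integral_div]
    refine integral_mono hDri ((hDti.add hDt'i).div_const 2) fun x => ?_
    have hb := Real.sq_sqrt (ht x)
    have hc := Real.sq_sqrt (ht' x)
    have hd := Real.sq_sqrt (hr0 x)
    have ha := Real.sqrt_nonneg (s x)
    have hb0 := Real.sqrt_nonneg (t x)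
    have hc0 := Real.sqrt_nonneg (t' x)
    have hd0 := Real.sqrt_nonneg (r x)
    have hbc : Real.sqrt (t x) + Real.sqrt (t' x) ≤ 2 * Real.sqrt (r x) := by
      have h1 : (Real.sqrt (t x) + Real.sqrt (t' x)) / 2 ≤ Real.sqrt (r x) := by
        rw [Real.le_sqrt (by positivity) (hr0 x), hr]
        nlinarith [sq_nonneg (Real.sqrt (t x) - Real.sqrt (t' x))]
      linarith
    have hrx := hr x
    nlinarith [mul_le_mul_of_nonneg_left hbc ha]
  -- expansions of Hellinger distances
  have hexp : ∀ (u : 𝒳 → ℝ), (∀ x, 0 ≤ u x) → (hui : Integrable u μ) →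
      ∫ x, (Real.sqrt (s x) - Real.sqrt (u x))^2 ∂μ
        = (∫ x, s x ∂μ) + (∫ x, u x ∂μ) - 2 * ∫ x, Real.sqrt (u x * s x) ∂μ := by
    intro u hu0 hui
    have hpt : ∀ x, (Real.sqrt (s x) - Real.sqrt (u x))^2
        = s x + u x - 2 * Real.sqrt (u x * s x) := by
      intro x
      rw [Real.sqrt_mul (hu0 x)]
      nlinarith [Real.sq_sqrt (hs x), Real.sq_sqrt (hu0 x)]
    have hsu : Integrable (fun x => s x + u x) μ := hsi.add hui
    rw [integral_congr_ae (Filter.Eventually.of_forall hpt),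
      integral_sub hsu ((aux_int_sqrt_mul hu0 hs hui hsi).const_mul 2),
      integral_add hsi hui, integral_const_mul]
  have e1 := hexp t ht hti
  have e2 := hexp t' ht' ht'i
  -- combine
  have hmul := mul_le_mul_of_nonneg_left hDr (Real.sqrt_nonneg 2)
  have hmain : (∫ x, (Real.sqrt (s x) - Real.sqrt (t' x))^2 ∂μ)
      - (∫ x, (Real.sqrt (s x) - Real.sqrt (t x))^2 ∂μ)
      ≤ Real.sqrt 2 * (((∫ x, (Real.sqrt (s x) - Real.sqrt (t x))^2 ∂μ)
        + ∫ x, (Real.sqrt (s x) - Real.sqrt (t' x))^2 ∂μ) / 2) := by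
    linarith [hTr, key, key', e1, e2, hE0, hE'le, hmul]
  have hDt0 : 0 ≤ ∫ x, (Real.sqrt (s x) - Real.sqrt (t x))^2 ∂μ :=
    integral_nonneg fun x => sq_nonneg _
  have hDt'0 : 0 ≤ ∫ x, (Real.sqrt (s x) - Real.sqrt (t' x))^2 ∂μ :=
    integral_nonneg fun x => sq_nonneg _
  exact aux_final hDt0 hDt'0 (Real.sq_sqrt (by norm_num)) aux_one_lt_sqrt_two hmain
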